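/- arXiv:1810.11797 — 5 statements merged into one kernel-verified Lean document; each statement's English description precedes it below -/
import Mathlib

section
/- Let n be an odd natural number with n ≥ 1, let m ≥ 1, let δ ∈ {1, −1} ⊆ ℂ, and let B be a polynomial over ℂ satisfying B ∘ (δ • T m) = (δ • T m) ∘ (T n). Then B = T n. -/
open Polynomial Polynomial.Chebyshev

/-- For odd `n`, `T n` composed with `-X` is `-T n`. -/
lemma T_comp_neg_of_odd (n : ℕ) (hn : Odd n) :
    (T ℂ n).comp (C (-1 : ℂ) * X) = C (-1 : ℂ) * T ℂ n := by
  apply Polynomial.funext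
  intro z
  obtain ⟨θ, rfl⟩ := Complex.cos_surjective z
  have h1 : (-1 : ℂ) * Complex.cos θ = Complex.cos (θ + Real.pi) := by
    rw [Complex.cos_add]
    simp [Complex.cos_pi, Complex.sin_pi]
  simp only [eval_comp, eval_mul, eval_C, eval_X, h1, T_complex_cos]
  obtain ⟨k, hk⟩ := hn
  have : ((n : ℤ) : ℂ) * (θ + Real.pi) =
      ((n : ℤ) : ℂ) * θ + Real.pi + (k : ℤ) * (2 * Real.pi) := by
    push_cast [hk]; ring
  rw [this, Complex.cos_add_int_mul_two_pi, Complex.cos_add]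
  simp [Complex.cos_pi, Complex.sin_pi]

/-- `C δ * T ℂ m` is not a constant polynomial for `m ≥ 1`, `δ = ±1`. -/
lemma CdT_ne_C (m : ℕ) (hm : 1 ≤ m) (δ : ℂ) (hδ : δ ∈ ({1, -1} : Set ℂ)) (c : ℂ) :
    C δ * T ℂ m ≠ C c := by
  intro hc
  have hδ' : δ = 1 ∨ δ = -1 := hδ
  have hδ0 : δ ≠ 0 := by rcases hδ' with rfl | rfl <;> norm_num
  have h1 : (C δ * T ℂ m).eval 1 = δ := by
    have : (1 : ℂ) = Complex.cos 0 := by simp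
    rw [this, eval_mul, eval_C, T_complex_cos]
    simp
  have h2 : (C δ * T ℂ m).eval (Complex.cos (Real.pi / m)) = -δ := by
    rw [eval_mul, eval_C, T_complex_cos]
    have : ((m : ℤ) : ℂ) * ((Real.pi : ℂ) / m) = (Real.pi : ℂ) := by
      have hm0 : (m : ℂ) ≠ 0 := by exact Nat.cast_ne_zero.mpr (by omega)
      push_cast
      field_simp
    rw [this, Complex.cos_pi, mul_neg_one]
  rw [hc, eval_C] at h1 h2
  rw [h1] at h2
  exact hδ0 (add_self_eq_zero.mp (by linear_combination h2))

/-- For odd `n`, the only polynomial `B` to which `±T_m` semiconjugates `T_n`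
is `T_n` itself. -/
theorem semiconjugate_to_chebyshev_of_odd
    (n m : ℕ) (hn : Odd n) (hn1 : 1 ≤ n) (hm : 1 ≤ m)
    (δ : ℂ) (hδ : δ ∈ ({1, -1} : Set ℂ))
    (B : Polynomial ℂ)
    (h : B.comp (C δ * T ℂ m) = (C δ * T ℂ m).comp (T ℂ n)) :
    B = T ℂ n := by
  -- rewrite RHS as (T n).comp (C δ * T m)
  have key : (T ℂ n).comp (C δ * T ℂ m) = (C δ * T ℂ m).comp (T ℂ n) := by
    have hTn : (T ℂ n).comp (C δ * X) = C δ * T ℂ n := by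
      rcases hδ with h1 | h1
      · subst h1; simp
      · simp only [Set.mem_singleton_iff] at h1
        subst h1; exact T_comp_neg_of_odd n hn
    calc (T ℂ n).comp (C δ * T ℂ m)
        = ((T ℂ n).comp (C δ * X)).comp (T ℂ m) := by
          rw [comp_assoc]; simp
      _ = (C δ * T ℂ n).comp (T ℂ m) := by rw [hTn]
      _ = C δ * (T ℂ n).comp (T ℂ m) := by simp
      _ = C δ * T ℂ ((n : ℤ) * m) := by rw [T_mul]
      _ = C δ * (T ℂ m).comp (T ℂ n) := by rw [mul_comm (n : ℤ) m, T_mul]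
      _ = (C δ * T ℂ m).comp (T ℂ n) := by simp
  have h0 : (B - T ℂ n).comp (C δ * T ℂ m) = 0 := by
    rw [sub_comp, h, key, sub_self]
  rcases comp_eq_zero_iff.mp h0 with h1 | h1
  · exact sub_eq_zero.mp h1
  · exact absurd h1.2 (CdT_ne_C m hm δ hδ _)
end

section
/- Let n be an odd natural number with n ≥ 1, let m ≥ 1 and k ≥ 1, let δ, δ′ ∈ {1, −1} ⊆ ℂ, and let B be a polynomial over ℂ such that B ∘ (δ • T m) = (δ • T m) ∘ (−T n) and (−T n) ∘ (δ′ • T k) = (δ′ • T k) ∘ B. Then B = −T n. In other words, if B and −T_n are mutually semiconjugate via signed Chebyshev polynomials and n is odd, then B = −T_n. -/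
open Polynomial Polynomial.Chebyshev

private lemma complex_sin_int_pi (j : ℤ) : Complex.sin (j * Real.pi) = 0 := by
  have : (j * Real.pi : ℂ) = ((j * Real.pi : ℝ) : ℂ) := by push_cast; ring
  rw [this, ← Complex.ofReal_sin, Real.sin_int_mul_pi]
  simp

private lemma complex_cos_int_pi (j : ℤ) : Complex.cos (j * Real.pi) = (-1) ^ j := by
  have : (j * Real.pi : ℂ) = ((j * Real.pi : ℝ) : ℂ) := by push_cast; ring
  rw [this, ← Complex.ofReal_cos]
  have := Real.cos_int_mul_pi_sub 0 j
  simp only [sub_zero, Real.cos_zero, mul_one] at this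
  rw [this]
  push_cast
  ring

private lemma cos_int_pi_sub (j : ℤ) (x : ℂ) :
    Complex.cos (j * Real.pi - x) = (-1) ^ j * Complex.cos x := by
  rw [Complex.cos_sub, complex_sin_int_pi, complex_cos_int_pi]
  ring

private lemma T_eval_neg_cos (j : ℤ) (x : ℂ) :
    (T ℂ j).eval (-(Complex.cos x)) = (-1) ^ j * Complex.cos (j * x) := by
  rw [← Complex.cos_pi_sub, T_complex_cos]
  have : (j : ℂ) * ((Real.pi : ℂ) - x) = j * Real.pi - j * x := by ring
  rw [this, cos_int_pi_sub]

private lemma T_eval_one' (j : ℤ) : (T ℂ j).eval 1 = 1 := by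
  have := T_complex_cos (0 : ℂ) j
  simpa using this

private lemma T_eval_neg_one' (j : ℤ) : (T ℂ j).eval (-1) = (-1) ^ j := by
  have := T_eval_neg_cos j 0
  simpa using this

private lemma eq_of_eval_cos {p q : ℂ[X]}
    (h : ∀ θ : ℂ, p.eval (Complex.cos θ) = q.eval (Complex.cos θ)) : p = q :=
  Polynomial.funext fun z => by
    obtain ⟨θ, rfl⟩ := Complex.cos_surjective z; exact h θ

private lemma comp_cancel {p q r : ℂ[X]} (hr : ∃ a b : ℂ, r.eval a ≠ r.eval b)
    (h : p.comp r = q.comp r) : p = q := by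
  have hz : (p - q).comp r = 0 := by rw [sub_comp, h, sub_self]
  rcases comp_eq_zero_iff.mp hz with h' | ⟨_, h'⟩
  · exact sub_eq_zero.mp h'
  · obtain ⟨a, b, hab⟩ := hr
    rw [h'] at hab
    simp at hab

/-- For odd `n`, if `B` and `−T_n` are mutually semiconjugate via signed
Chebyshev polynomials, then `B = −T_n`. -/
theorem mutually_semiconjugate_to_neg_chebyshev_of_odd
    (n m k : ℕ) (hn : Odd n) (hn1 : 1 ≤ n) (hm : 1 ≤ m) (hk : 1 ≤ k)
    (δ δ' : ℂ) (hδ : δ ∈ ({1, -1} : Set ℂ)) (hδ' : δ' ∈ ({1, -1} : Set ℂ))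
    (B : Polynomial ℂ)
    (h₁ : B.comp (C δ * T ℂ m) = (C δ * T ℂ m).comp (-(T ℂ n)))
    (h₂ : (-(T ℂ n)).comp (C δ' * T ℂ k) = (C δ' * T ℂ k).comp B) :
    B = -(T ℂ n) := by
  have hnodd : ((-1 : ℂ)) ^ (n : ℤ) = -1 := by
    rw [zpow_natCast]
    exact Odd.neg_one_pow hn
  -- the signed Chebyshev map C δ * T m is nonconstant
  have hδ0 : δ ≠ 0 := by
    rcases hδ with rfl | h
    · norm_num
    · simp only [Set.mem_singleton_iff] at h; rw [h]; norm_num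
  have hnc : ∃ a b : ℂ, (C δ * T ℂ (m : ℤ)).eval a ≠ (C δ * T ℂ (m : ℤ)).eval b := by
    refine ⟨1, Complex.cos ((Real.pi : ℂ) / (m : ℂ)), ?_⟩
    have hm0 : (m : ℂ) ≠ 0 := Nat.cast_ne_zero.mpr (by omega)
    have h2 : (T ℂ (m : ℤ)).eval (Complex.cos ((Real.pi : ℂ) / (m : ℂ))) = -1 := by
      rw [T_complex_cos]
      rw [show ((m : ℤ) : ℂ) * ((Real.pi : ℂ) / (m : ℂ)) = (Real.pi : ℂ) by
        push_cast; field_simp]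
      rw [← Complex.ofReal_cos, Real.cos_pi]
      norm_num
    simp only [eval_mul, eval_C, T_eval_one', h2]
    intro hc
    apply hδ0
    linear_combination hc / 2
  -- key computation
  have key : (C δ * T ℂ (m : ℤ)).comp (-(T ℂ (n : ℤ))) =
      (C ((-1) ^ (m : ℤ)) * T ℂ (n : ℤ)).comp (C δ * T ℂ (m : ℤ)) := by
    apply eq_of_eval_cos
    intro θ
    simp only [eval_comp, eval_mul, eval_C, eval_neg, T_complex_cos]
    rw [T_eval_neg_cos]
    rcases hδ with rfl | h
    · simp only [one_mul, T_complex_cos]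
      ring_nf
    · simp only [Set.mem_singleton_iff] at h
      subst h
      rw [show (-1 : ℂ) * Complex.cos ((m : ℤ) * θ) = -(Complex.cos ((m : ℤ) * θ)) by ring,
        T_eval_neg_cos, hnodd]
      ring_nf
  have hB : B = C ((-1) ^ (m : ℤ)) * T ℂ (n : ℤ) := by
    apply comp_cancel hnc
    rw [h₁, key]
  rcases Nat.even_or_odd m with hme | hmo
  · -- even case: B = T n, contradict h₂ by evaluating at 1
    exfalso
    have hBeq : B = T ℂ (n : ℤ) := by
      rw [hB, show ((-1 : ℂ)) ^ (m : ℤ) = 1 by rw [zpow_natCast]; exact hme.neg_one_pow]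
      simp
    have := congrArg (fun p => Polynomial.eval 1 p) h₂
    simp only [hBeq, eval_comp, eval_mul, eval_C, eval_neg, T_eval_one', mul_one] at this
    rcases hδ' with rfl | h
    · simp only [one_mul, T_eval_one'] at this
      norm_num at this
    · simp only [Set.mem_singleton_iff] at h
      subst h
      rw [T_eval_neg_one', hnodd] at this
      norm_num at this
  · rw [hB, show ((-1 : ℂ)) ^ (m : ℤ) = -1 by rw [zpow_natCast]; exact hmo.neg_one_pow]
    simp
end

section
/- Let a, b ∈ ℂ with a ≠ 0 and b ≠ 0, let n, m ∈ ℤ with m ≠ 0, and let B : ℂ → ℂ satisfy B (b * z ^ m) = b * (a * z ^ n) ^ m for all z ≠ 0 (integer powers zpow). Then B w = a ^ m * b ^ (1 - n) * w ^ n for all w ≠ 0. -/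
lemma exists_zpow_eq (c : ℂ) (hc : c ≠ 0) (m : ℤ) (hm : m ≠ 0) :
    ∃ z : ℂ, z ≠ 0 ∧ z ^ m = c := by
  have hpos : 0 < m.natAbs := Int.natAbs_pos.mpr hm
  rcases m.lt_or_lt_of_ne hm with hneg | hposm
  · obtain ⟨z, hz⟩ := IsAlgClosed.exists_pow_nat_eq c⁻¹ hpos
    have hz0 : z ≠ 0 := by
      intro h; rw [h] at hz; simp [hpos.ne'] at hz
      exact hc hz.symm
    refine ⟨z, hz0, ?_⟩
    have : m = -(m.natAbs : ℤ) := by omega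
    rw [this, zpow_neg, zpow_natCast, hz, inv_inv]
  · obtain ⟨z, hz⟩ := IsAlgClosed.exists_pow_nat_eq c hpos
    have hz0 : z ≠ 0 := by
      intro h; rw [h] at hz; simp [hpos.ne'] at hz; exact hc hz.symm
    refine ⟨z, hz0, ?_⟩
    have : m = (m.natAbs : ℤ) := by omega
    rw [this, zpow_natCast, hz]

/-- A map semiconjugate to the power map `z ↦ a z^n` via the power map
`z ↦ b z^m` is the explicit power map `w ↦ a^m b^{1−n} w^n` on `ℂ \ {0}`. -/
theorem semiconjugate_to_power_map
    (a b : ℂ) (ha : a ≠ 0) (hb : b ≠ 0)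
    (n m : ℤ) (hm : m ≠ 0)
    (B : ℂ → ℂ)
    (h : ∀ z : ℂ, z ≠ 0 → B (b * z ^ m) = b * (a * z ^ n) ^ m) :
    ∀ w : ℂ, w ≠ 0 → B w = a ^ m * b ^ (1 - n) * w ^ n := by
  intro w hw
  obtain ⟨z, hz0, hz⟩ := exists_zpow_eq (w / b) (div_ne_zero hw hb) m hm
  have hw' : b * z ^ m = w := by rw [hz]; field_simp
  have := h z hz0
  rw [hw'] at this
  rw [this, mul_zpow, ← zpow_mul, mul_comm n m, zpow_mul, hz, div_zpow,
    zpow_sub₀ hb, zpow_one]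
  field_simp
end

section
/- Let a, b ∈ ℂ with a ≠ 0 and b ≠ 0, let n, m ∈ ℤ with m ≠ 0 and |n| ≥ 2, and let B : ℂ → ℂ satisfy B (b * z ^ m) = b * (a * z ^ n) ^ m for all z ≠ 0 (integer powers zpow). Then B is conjugate to the map z ↦ a * z ^ n by a linear map: there exists c ∈ ℂ, c ≠ 0, such that B (c * z) = c * (a * z ^ n) for all z ≠ 0. -/
/-- Every nonzero complex number has a `k`-th root for any nonzero integer `k`. -/
lemma exists_zpow_eq_aux (k : ℤ) (hk : k ≠ 0) (w : ℂ) (hw : w ≠ 0) :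
    ∃ c : ℂ, c ≠ 0 ∧ c ^ k = w := by
  refine ⟨Complex.exp (Complex.log w / k), Complex.exp_ne_zero _, ?_⟩
  have hk' : (k : ℂ) ≠ 0 := Int.cast_ne_zero.mpr hk
  rw [← Complex.exp_int_mul, mul_div_cancel₀ _ hk', Complex.exp_log hw]

/-- A map semiconjugate to the power map `z ↦ a z^n` via the power map
`z ↦ b z^m` is linearly conjugate to `z ↦ a z^n` on `ℂ \ {0}`. -/
theorem semiconjugate_to_power_map_conjugate
    (a b : ℂ) (ha : a ≠ 0) (hb : b ≠ 0)
    (n m : ℤ) (hm : m ≠ 0) (hn : 2 ≤ |n|)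
    (B : ℂ → ℂ)
    (h : ∀ z : ℂ, z ≠ 0 → B (b * z ^ m) = b * (a * z ^ n) ^ m) :
    ∃ c : ℂ, c ≠ 0 ∧ ∀ z : ℂ, z ≠ 0 → B (c * z) = c * (a * z ^ n) := by
  have hn1 : n - 1 ≠ 0 := by rcases abs_cases n with ⟨h1, _⟩ | ⟨h1, _⟩ <;> omega
  obtain ⟨d, hd, hdpow⟩ := exists_zpow_eq_aux (n - 1) hn1 (a ^ (1 - m)) (zpow_ne_zero _ ha)
  refine ⟨b * d, mul_ne_zero hb hd, fun z hz => ?_⟩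
  obtain ⟨w, hw, hwpow⟩ := exists_zpow_eq_aux m hm (d * z) (mul_ne_zero hd hz)
  have hbz : b * d * z = b * w ^ m := by rw [hwpow]; ring
  rw [hbz, h w hw]
  -- key power identities
  have h1 : w ^ (n * m) = (d * z) ^ n := by rw [mul_comm n m, zpow_mul, hwpow]
  have h2 : d ^ n = d ^ (n - 1) * d := by
    rw [← zpow_add_one₀ hd, sub_add_cancel]
  have h3 : a ^ (1 - m) * a ^ m = a := by
    rw [← zpow_add₀ ha, sub_add_cancel, zpow_one]
  calc b * (a * w ^ n) ^ m
      = b * (a ^ m * w ^ (n * m)) := by rw [mul_zpow, ← zpow_mul]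
    _ = b * (a ^ m * ((d * z) ^ n)) := by rw [h1]
    _ = b * (a ^ m * (d ^ n * z ^ n)) := by rw [mul_zpow]
    _ = b * (a ^ m * (d ^ (n - 1) * d * z ^ n)) := by rw [h2]
    _ = b * ((a ^ (1 - m) * a ^ m) * d * z ^ n) := by rw [hdpow]; ring
    _ = b * d * (a * z ^ n) := by rw [h3]; ring
end

section
/- Let n be an odd natural number with n ≥ 1. Then the Chebyshev polynomial T n and its negative −T n are not conjugate by any affine map: there do not exist c, d ∈ ℂ with c ≠ 0 such that (C c * X + C d) ∘ (T n) = (−T n) ∘ (C c * X + C d) as polynomials over ℂ. -/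
open Polynomial Polynomial.Chebyshev

private lemma U_comp_neg_aux : ∀ k : ℕ, (U ℂ (k : ℤ)).comp (-X) = (-1) ^ k * U ℂ (k : ℤ) := by
  intro k
  induction k using Nat.twoStepInduction with
  | zero => simp [U_zero]
  | one =>
    simp only [Nat.cast_one, U_one, mul_comp, ofNat_comp, X_comp, pow_one, mul_neg]
    ring
  | more k ih1 ih2 =>
    have h2 : ((k + 2 : ℕ) : ℤ) = (k : ℤ) + 2 := by push_cast; ring
    have h1 : ((k + 1 : ℕ) : ℤ) = (k : ℤ) + 1 := by push_cast; ring
    rw [h2, U_add_two, ← h1]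
    simp only [sub_comp, mul_comp, ofNat_comp, X_comp, ih1, ih2]
    push_cast [h1]
    ring

private lemma U_eval_zero_aux : ∀ m : ℕ,
    (U ℂ (2 * (m : ℤ))).eval 0 = (-1) ^ m ∧ (U ℂ (2 * (m : ℤ) + 1)).eval 0 = 0 := by
  intro m
  induction m with
  | zero => simp [U_zero, U_one]
  | succ m ih =>
    have h1 : 2 * ((m : ℤ) + 1) = 2 * (m : ℤ) + 2 := by ring
    have h2 : 2 * ((m : ℤ) + 1) + 1 = (2 * (m : ℤ) + 1) + 2 := by ring
    constructor
    · push_cast [h1, U_add_two]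
      simp [ih.1, ih.2, pow_succ]
    · push_cast [h2, U_add_two]
      simp [ih.1, ih.2, pow_succ]

/-- For odd `n`, the Chebyshev polynomial `T n` and `−T n` are not conjugate
by any affine map. -/
theorem chebyshev_neg_chebyshev_not_conjugate_of_odd
    (n : ℕ) (hn : Odd n) (hn1 : 1 ≤ n) :
    ¬ ∃ c d : ℂ, c ≠ 0 ∧
      (C c * X + C d).comp (T ℂ n) = (-(T ℂ n)).comp (C c * X + C d) := by
  rintro ⟨c, d, hc, h⟩
  obtain ⟨m, hm⟩ := hn
  set P : ℂ[X] := T ℂ n with hP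
  set μ : ℂ[X] := C c * X + C d with hμ
  set P' : ℂ[X] := derivative P with hP'
  -- The conjugacy equation
  have hE : C c * P + C d = -(P.comp μ) := by
    simpa only [hμ, add_comp, mul_comp, C_comp, X_comp, neg_comp] using h
  -- Differentiate it
  have hDμ : derivative μ = C c := by simp [hμ]
  have hD : C c * P' = C c * (-(P'.comp μ)) := by
    have := congrArg derivative hE
    rw [derivative_add, derivative_mul, derivative_C, derivative_C, derivative_neg,
      derivative_comp, hDμ] at this
    simpa [mul_comm, mul_left_comm, mul_assoc] using this
  have hCc : (C c : ℂ[X]) ≠ 0 := by simpa using hc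
  have hD' : P' = -(P'.comp μ) := mul_left_cancel₀ hCc hD
  -- Evaluation form
  have hB : ∀ z : ℂ, P'.eval z = -(P'.eval (c * z + d)) := by
    intro z
    have := congrArg (eval z) hD'
    simpa [eval_comp, hμ] using this
  -- P' = n * U (n-1) with n-1 = 2m even
  have hnm : ((n : ℤ) - 1) = 2 * (m : ℤ) := by
    have : (n : ℤ) = 2 * (m : ℤ) + 1 := by exact_mod_cast hm
    omega
  have hPU : P' = (C (n : ℂ)) * U ℂ (2 * (m : ℤ)) := by
    rw [hP', hP, T_derivative_eq_U, hnm]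
    simp [Polynomial.C_eq_intCast]
  -- P' is an even polynomial
  have hEven : ∀ z : ℂ, P'.eval (-z) = P'.eval z := by
    intro z
    have hu := congrArg (eval z) (U_comp_neg_aux (2 * m))
    rw [eval_comp] at hu
    have h2m : ((2 * m : ℕ) : ℤ) = 2 * (m : ℤ) := by push_cast; ring
    rw [h2m] at hu
    simp only [eval_neg, eval_X, eval_mul, eval_pow, eval_neg, eval_one] at hu
    rw [hPU]
    simp only [eval_mul, eval_C]
    rw [hu]
    simp [pow_mul]
  -- symmetry about d : P'(2d - w) = P'(w)
  have hsym : ∀ w : ℂ, P'.eval (2 * d - w) = P'.eval w := by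
    intro w
    have hz1 : c * ((w - d) / c) + d = w := by field_simp; ring
    have hz2 : c * (-((w - d) / c)) + d = 2 * d - w := by field_simp; ring
    have e1 := hB ((w - d) / c)
    have e2 := hB (-((w - d) / c))
    rw [hz1] at e1
    rw [hz2] at e2
    rw [hEven] at e2
    have : -(P'.eval w) = -(P'.eval (2 * d - w)) := by rw [← e1, e2]
    exact (neg_injective this).symm
  -- periodicity with period 2d
  have hper : ∀ w : ℂ, P'.eval (w + 2 * d) = P'.eval w := by
    intro w
    have h1 := hsym (-w)
    rw [hEven] at h1
    have : (2 : ℂ) * d - -w = w + 2 * d := by ring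
    rwa [this] at h1
  -- conclude P'.eval 0 = 0
  have hzero : P'.eval 0 = 0 := by
    by_cases hd : d = 0
    · have := hB 0
      rw [hd] at this
      simp at this
      linear_combination this / 2
    · -- P' - C (P'.eval 0) has infinitely many roots
      set q : ℂ[X] := P' - C (P'.eval 0) with hq
      have hroots : ∀ k : ℕ, q.eval (2 * d * k) = 0 := by
        intro k
        induction k with
        | zero => simp [hq]
        | succ k ih =>
          have : (2 : ℂ) * d * (k + 1) = 2 * d * k + 2 * d := by ring
          push_cast [this]
          simp only [hq, eval_sub, eval_C] at ih ⊢
          rw [hper]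
          exact ih
      have hinf : Set.Infinite { x : ℂ | q.IsRoot x } := by
        apply Set.infinite_of_injective_forall_mem (f := fun k : ℕ => 2 * d * (k : ℂ))
        · intro a b hab
          simp only at hab
          have h2d : (2 : ℂ) * d ≠ 0 := by simp [hd]
          have := mul_left_cancel₀ h2d hab
          exact_mod_cast this
        · intro k
          exact hroots k
      have hq0 : q = 0 := q.eq_zero_of_infinite_isRoot hinf
      have hconst : ∀ z : ℂ, P'.eval z = P'.eval 0 := by
        intro z
        have := congrArg (eval z) hq0
        simpa [hq, sub_eq_zero] using this
      have := hB 0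
      rw [hconst (c * 0 + d)] at this
      linear_combination this / 2
  -- but P'.eval 0 = ± n ≠ 0
  have hval : P'.eval 0 = (n : ℂ) * (-1) ^ m := by
    rw [hPU]
    simp [(U_eval_zero_aux m).1]
  rw [hval] at hzero
  have hn0 : (n : ℂ) ≠ 0 := by exact_mod_cast (by omega : n ≠ 0)
  have : ((-1 : ℂ)) ^ m ≠ 0 := by
    apply pow_ne_zero; norm_num
  exact (mul_ne_zero hn0 this) hzero
end
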